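/- For each x in the positive braid monoid B_n^+, the entries of the matrix of the Krammer action of x on V (over R = R[t,t^{-1}] with 0 < q < 1 real) lie in R_{≥0} + tR[t]; equivalently, the action of every positive braid preserves the set W = ⊕_{i<j} (R_{≥0} + tR[t]) x_{i,j}. -/

import Mathlib

open LaurentPolynomial

def braidRels (n : ℕ) : Set (FreeGroup (Fin n)) :=
  {r | (∃ i j : Fin n, (i : ℕ) + 2 ≤ (j : ℕ) ∧
          r = .of i * .of j * (.of i)⁻¹ * (.of j)⁻¹) ∨
       (∃ i j : Fin n, (j : ℕ) = (i : ℕ) + 1 ∧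
          r = .of i * .of j * .of i * (.of j * .of i * .of j)⁻¹)}

abbrev BraidGroup (n : ℕ) : Type := PresentedGroup (braidRels n)

def Ref (n : ℕ) : Type := {p : ℕ × ℕ // 1 ≤ p.1 ∧ p.1 < p.2 ∧ p.2 ≤ n}

instance (n : ℕ) : DecidableEq (Ref n) := fun a b =>
  decidable_of_iff (a.val = b.val) Subtype.ext_iff.symm

def krammerCoeff {R : Type*} [CommRing R] (q t : R) (k i j : ℕ) (p : ℕ × ℕ) : R :=
  if k + 1 < i ∨ j < k then (if p = (i, j) then 1 else 0)
  else if i = k + 1 then (if p = (k, j) then 1 else if p = (i, j) then 1 - q else 0)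
  else if k = i ∧ i + 1 < j then
    (if p = (i, i + 1) then t * q * (q - 1) else if p = (i + 1, j) then q else 0)
  else if k = i ∧ j = i + 1 then (if p = (i, j) then t * q ^ 2 else 0)
  else if i < k ∧ k + 1 < j then
    (if p = (i, j) then 1 else if p = (k, k + 1) then t * q ^ (k - i) * (q - 1) ^ 2 else 0)
  else if k + 1 = j then
    (if p = (i, k) then 1 else if p = (k, j) then t * q ^ (j - i) * (q - 1) else 0)
  else (if p = (i, j) then 1 - q else if p = (i, j + 1) then q else 0)

/-- The set `ℝ_{≥0} + t·ℝ[t]` of Laurent polynomials with no negative powers of `t` and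
nonnegative constant term. -/
def nonnegConst : Set (LaurentPolynomial ℝ) :=
  {p | ∃ f : Polynomial ℝ, 0 ≤ f.coeff 0 ∧ Polynomial.toLaurent f = p}


noncomputable instance (n : ℕ) : Fintype (Ref n) :=
  Fintype.ofInjective (fun r : Ref n =>
      ((⟨r.1.1, by obtain ⟨h1, h2, h3⟩ := r.2; omega⟩ : Fin (n+1)),
       (⟨r.1.2, by obtain ⟨h1, h2, h3⟩ := r.2; omega⟩ : Fin (n+1))))
    (fun a b h => by
      apply Subtype.ext
      have h1 := congrArg (fun p => (Prod.fst p : Fin (n+1)).1) h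
      have h2 := congrArg (fun p => (Prod.snd p : Fin (n+1)).1) h
      exact Prod.ext h1 h2)

lemma nonnegConst_zero : (0 : LaurentPolynomial ℝ) ∈ nonnegConst := ⟨0, by simp, by simp⟩

lemma nonnegConst_add {a b} (ha : a ∈ nonnegConst) (hb : b ∈ nonnegConst) :
    a + b ∈ nonnegConst := by
  obtain ⟨f, hf, rfl⟩ := ha; obtain ⟨g, hg, rfl⟩ := hb
  exact ⟨f + g, by simpa using add_nonneg hf hg, by simp⟩

lemma nonnegConst_mul {a b} (ha : a ∈ nonnegConst) (hb : b ∈ nonnegConst) :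
    a * b ∈ nonnegConst := by
  obtain ⟨f, hf, rfl⟩ := ha; obtain ⟨g, hg, rfl⟩ := hb
  exact ⟨f * g, by simpa [Polynomial.mul_coeff_zero] using mul_nonneg hf hg, by simp⟩

lemma nonnegConst_sum {ι : Type*} (s : Finset ι) (f : ι → LaurentPolynomial ℝ)
    (h : ∀ i ∈ s, f i ∈ nonnegConst) : ∑ i ∈ s, f i ∈ nonnegConst := by
  classical
  induction s using Finset.induction with
  | empty => simpa using nonnegConst_zero
  | insert _ _ hx ih =>
      rw [Finset.sum_insert hx]
      exact nonnegConst_add (h _ (Finset.mem_insert_self _ _))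
        (ih fun i hi => h i (Finset.mem_insert_of_mem hi))

set_option maxHeartbeats 1000000 in
lemma nonnegConst_krammer {q₀ : ℝ} (hq : 0 ≤ q₀) (hq1 : q₀ ≤ 1) (k i j : ℕ) (p : ℕ × ℕ) :
    krammerCoeff (C q₀) (T 1) k i j p ∈ nonnegConst := by
  have h1 : (1 : LaurentPolynomial ℝ) ∈ nonnegConst := ⟨1, by simp, by simp⟩
  have h0 : (0 : LaurentPolynomial ℝ) ∈ nonnegConst := ⟨0, by simp, by simp⟩
  have hC : (C q₀ : LaurentPolynomial ℝ) ∈ nonnegConst := ⟨Polynomial.C q₀, by simpa, by simp⟩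
  have h1C : (1 - C q₀ : LaurentPolynomial ℝ) ∈ nonnegConst :=
    ⟨1 - Polynomial.C q₀, by simpa [sub_nonneg], by simp⟩
  have hT1 : (T 1 * C q₀ * (C q₀ - 1) : LaurentPolynomial ℝ) ∈ nonnegConst :=
    ⟨Polynomial.X * Polynomial.C q₀ * (Polynomial.C q₀ - 1),
      by simp [Polynomial.mul_coeff_zero], by simp⟩
  have hT2 : (T 1 * C q₀ ^ 2 : LaurentPolynomial ℝ) ∈ nonnegConst :=
    ⟨Polynomial.X * Polynomial.C q₀ ^ 2, by simp [Polynomial.mul_coeff_zero], by simp⟩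
  have hT3 : ∀ m : ℕ, (T 1 * C q₀ ^ m * (C q₀ - 1) ^ 2 : LaurentPolynomial ℝ) ∈ nonnegConst :=
    fun m => ⟨Polynomial.X * Polynomial.C q₀ ^ m * (Polynomial.C q₀ - 1) ^ 2,
      by simp [Polynomial.mul_coeff_zero], by simp⟩
  have hT4 : ∀ m : ℕ, (T 1 * C q₀ ^ m * (C q₀ - 1) : LaurentPolynomial ℝ) ∈ nonnegConst :=
    fun m => ⟨Polynomial.X * Polynomial.C q₀ ^ m * (Polynomial.C q₀ - 1),
      by simp [Polynomial.mul_coeff_zero], by simp⟩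
  unfold krammerCoeff
  split_ifs
  all_goals first
    | with_reducible exact h1 | with_reducible exact h0 | with_reducible exact hC | with_reducible exact h1C | with_reducible exact hT1 | with_reducible exact hT2
    | with_reducible exact hT3 _ | with_reducible exact hT4 _


/-- For the Krammer representation of `B_{n+1}` over `ℝ[t,t⁻¹]` with `q` a real number,
`0 < q < 1`, every element of the positive braid monoid `B_{n+1}^+` (the submonoid generated
by the `σ_k`) maps the set `W = ⊕_{i<j} (ℝ_{≥0} + tℝ[t]) x_{i,j}` into itself. -/
theorem krammer_positive_braids_preserve_W (n : ℕ) (q₀ : ℝ) (hq : 0 < q₀) (hq1 : q₀ < 1)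
    (ρ : BraidGroup n →* LinearMap.GeneralLinearGroup (LaurentPolynomial ℝ)
      (Ref (n + 1) → LaurentPolynomial ℝ))
    (hρ : ∀ (k : Fin n) (s : Ref (n + 1)),
      ((ρ (PresentedGroup.of k) : (Ref (n + 1) → LaurentPolynomial ℝ) →ₗ[LaurentPolynomial ℝ]
          (Ref (n + 1) → LaurentPolynomial ℝ)) (Pi.single s 1))
        = fun r : Ref (n + 1) =>
            krammerCoeff (C q₀) (T 1) ((k : ℕ) + 1) s.val.1 s.val.2 r.val) :
    ∀ x ∈ Submonoid.closure (Set.range fun k : Fin n => ρ (PresentedGroup.of k)),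
      ∀ v : Ref (n + 1) → LaurentPolynomial ℝ, (∀ r, v r ∈ nonnegConst) →
        ∀ r, ((x : (Ref (n + 1) → LaurentPolynomial ℝ) →ₗ[LaurentPolynomial ℝ]
          (Ref (n + 1) → LaurentPolynomial ℝ)) v) r ∈ nonnegConst := by
  intro x hx
  induction hx using Submonoid.closure_induction with
  | mem x hx =>
      obtain ⟨k, rfl⟩ := hx
      intro v hv r
      have hv2 : v = ∑ s : Ref (n+1), v s • (Pi.single s 1 : Ref (n+1) → LaurentPolynomial ℝ) := by
        funext u
        rw [Finset.sum_apply]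
        simp [Pi.single_apply, eq_comm]
      rw [hv2, map_sum, Finset.sum_apply]
      refine nonnegConst_sum _ _ fun s _ => ?_
      rw [map_smul, Pi.smul_apply, hρ k s, smul_eq_mul]
      exact nonnegConst_mul (hv s) (nonnegConst_krammer hq.le hq1.le _ _ _ _)
  | one =>
      intro v hv r
      simpa using hv r
  | mul a b ha hb iha ihb =>
      intro v hv r
      have : ((↑(a * b) : (Ref (n + 1) → LaurentPolynomial ℝ) →ₗ[LaurentPolynomial ℝ]
          (Ref (n + 1) → LaurentPolynomial ℝ)) v)
          = (↑a : (Ref (n + 1) → LaurentPolynomial ℝ) →ₗ[LaurentPolynomial ℝ]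
          (Ref (n + 1) → LaurentPolynomial ℝ))
          ((↑b : (Ref (n + 1) → LaurentPolynomial ℝ) →ₗ[LaurentPolynomial ℝ]
          (Ref (n + 1) → LaurentPolynomial ℝ)) v) := by
        simp [Units.val_mul]
      rw [this]
      exact iha _ (fun r' => ihb v hv r') r
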